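/- Assume the McKay Conjecture holds for the prime p: for every finite group H and Sylow p-subgroup Q of H, μ_p(H) = μ_p(N_H(Q)). Then for every finite group G with Sylow p-subgroup P and N = N_G(P), if R is a set of representatives for the conjugacy classes of G of cardinality coprime to p and S is a set of representatives for the conjugacy classes of N of cardinality coprime to p, then Σ_{g ∈ R} μ_p(C_G(g)) = Σ_{n ∈ S} μ_p(C_N(n)). -/

import Mathlib

open CategoryTheory

/-- `mu p H` is the number of isomorphism classes of irreducible finite-dimensional
complex representations of `H` whose dimension is coprime to `p`. -/
noncomputable def mu (p : ℕ) (H : Type) [Group H] : ℕ :=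
  Nat.card {c : _root_.Quotient (isIsomorphicSetoid (FDRep ℂ H)) //
    ∃ V : FDRep ℂ H, Quotient.mk (isIsomorphicSetoid (FDRep ℂ H)) V = c ∧
      Simple V ∧ p.Coprime (Module.finrank ℂ V)}

section SimpleTransfer

open Limits

universe u₁ u₂ v₁ v₂

theorem simple_of_equivalence {C : Type u₁} {D : Type u₂} [Category.{v₁} C] [Category.{v₂} D]
    [HasZeroMorphisms C] [HasZeroMorphisms D]
    (e : C ≌ D) (hz : ∀ {X Y : D} (f : X ⟶ Y), e.inverse.map f = 0 ↔ f = 0)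
    (X : C) [Simple X] : Simple (e.functor.obj X) := by
  haveI : Simple ((𝟭 C).obj X) := ‹Simple X›
  constructor
  intro Y f m
  have key : e.functor.map (e.inverse.map f)
      = e.counit.app Y ≫ f ≫ e.counitInv.app (e.functor.obj X) :=
    e.fun_inv_map Y (e.functor.obj X) f
  have m1 : Mono (e.functor.map (e.inverse.map f)) := by
    rw [key]; infer_instance
  have m2 : Mono (e.inverse.map f) := e.functor.mono_of_mono_map m1
  have hfg : e.inverse.map f = (e.inverse.map f ≫ e.unitInv.app X) ≫ e.unit.app X := by simp
  have mg : Mono (e.inverse.map f ≫ e.unitInv.app X) := mono_comp _ _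
  have hiso := Simple.mono_isIso_iff_nonzero (e.inverse.map f ≫ e.unitInv.app X)
  constructor
  · intro hf h0
    have hg : IsIso (e.inverse.map f ≫ e.unitInv.app X) := by
      haveI : IsIso (e.inverse.map f) := inferInstance
      infer_instance
    have := hiso.mp hg
    apply this
    rw [h0, (hz (0 : Y ⟶ e.functor.obj X)).mpr rfl, zero_comp]
  · intro h0
    have hg0 : e.inverse.map f ≫ e.unitInv.app X ≠ 0 := by
      intro h
      apply h0
      apply (hz f).mp
      rw [hfg, h, zero_comp]
    haveI : IsIso (e.inverse.map f ≫ e.unitInv.app X) := hiso.mpr hg0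
    haveI : IsIso (e.inverse.map f) := by rw [hfg]; infer_instance
    exact isIso_of_reflects_iso f e.inverse

end SimpleTransfer

section MuCongr

variable {H K : Type} [Group H] [Group K]

/-- The equivalence of representation categories induced by a group isomorphism. -/
noncomputable def resEquiv (e : H ≃* K) : FDRep ℂ H ≌ FDRep ℂ K :=
  have hH : e.symm.toMonoidHom.comp e.toMonoidHom
      = MonoidHom.id H := by
    ext x; exact e.symm_apply_apply x
  have hK : e.toMonoidHom.comp e.symm.toMonoidHom
      = MonoidHom.id K := by
    ext x; exact e.apply_symm_apply x
  CategoryTheory.Equivalence.mk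
    (Action.res _ e.symm.toMonoidHom)
    (Action.res _ e.toMonoidHom)
    ((Action.resId _).symm ≪≫ eqToIso (by rw [← hH]) ≪≫
      (Action.resComp _ e.toMonoidHom e.symm.toMonoidHom).symm)
    ((Action.resComp _ e.symm.toMonoidHom e.toMonoidHom) ≪≫
      eqToIso (by rw [hK]) ≪≫ Action.resId _)

theorem res_zero_iff (f : K →* H) {X Y : FDRep ℂ H}
    (u : X ⟶ Y) : (Action.res _ f).map u = 0 ↔ u = 0 := by
  constructor
  · intro h
    have h2 := congrArg Action.Hom.hom h
    exact Action.Hom.ext h2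
  · rintro rfl
    exact Action.Hom.ext rfl

theorem mu_congr (e : H ≃* K) (p : ℕ) : mu p H = mu p K := by
  have hz : ∀ {X Y : FDRep ℂ K} (u : X ⟶ Y), (resEquiv e).inverse.map u = 0 ↔ u = 0 :=
    fun u => res_zero_iff e.toMonoidHom u
  have hz' : ∀ {X Y : FDRep ℂ H} (u : X ⟶ Y), (resEquiv e).symm.inverse.map u = 0 ↔ u = 0 :=
    fun u => res_zero_iff e.symm.toMonoidHom u
  apply Nat.card_congr
  refine Equiv.subtypeEquiv
    ⟨Quotient.map (resEquiv e).functor.obj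
        (fun a b h => ⟨(resEquiv e).functor.mapIso h.some⟩),
      Quotient.map (resEquiv e).inverse.obj
        (fun a b h => ⟨(resEquiv e).inverse.mapIso h.some⟩), ?_, ?_⟩ ?_
  · intro c
    induction c using Quotient.ind with
    | _ V => exact Quotient.sound ⟨((resEquiv e).unitIso.app V).symm⟩
  · intro c
    induction c using Quotient.ind with
    | _ W => exact Quotient.sound ⟨(resEquiv e).counitIso.app W⟩
  · intro c
    induction c using Quotient.ind with
    | _ V =>
      constructor
      · rintro ⟨V', hV', hs, hcop⟩
        haveI := hs
        refine ⟨(resEquiv e).functor.obj V',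
          Quotient.sound ⟨(resEquiv e).functor.mapIso (Quotient.exact hV').some⟩,
          simple_of_equivalence (resEquiv e) hz V', hcop⟩
      · rintro ⟨W, hW, hs, hcop⟩
        haveI := hs
        refine ⟨(resEquiv e).inverse.obj W,
          Quotient.sound ⟨((resEquiv e).inverse.mapIso (Quotient.exact hW).some) ≪≫
            ((resEquiv e).unitIso.app V).symm⟩,
          simple_of_equivalence (resEquiv e).symm hz' W, hcop⟩

end MuCongr

section GroupHelpers

open scoped Pointwise

variable {G : Type} [Group G]

theorem card_isConj_eq_index (g : G) :
    Nat.card {h : G | IsConj g h} = (Subgroup.centralizer {g}).index := by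
  have h1 : {h : G | IsConj g h} = MulAction.orbit (ConjAct G) g := by
    ext h
    simp only [Set.mem_setOf_eq]
    rw [ConjAct.mem_orbit_conjAct, isConj_comm]
  calc Nat.card {h : G | IsConj g h}
      = Nat.card (MulAction.orbit (ConjAct G) g) := by rw [h1]
    _ = Nat.card ((ConjAct G) ⧸ MulAction.stabilizer (ConjAct G) g) :=
        Nat.card_congr (MulAction.orbitEquivQuotientStabilizer _ g)
    _ = (MulAction.stabilizer (ConjAct G) g).index := rfl
    _ = (Subgroup.centralizer {g}).index := by
        rw [Subgroup.centralizer_eq_comap_stabilizer]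
        exact (Subgroup.index_comap_of_surjective (H := MulAction.stabilizer (ConjAct G) g)
          (f := ConjAct.toConjAct.toMonoidHom) ConjAct.toConjAct.surjective).symm

theorem sylow_le_conj_centralizer [Fintype G] {p : ℕ} [Fact p.Prime] (P : Sylow p G)
    (K : Subgroup G) (hK : ¬ p ∣ K.index) :
    ∃ x : G, ∀ w ∈ (P : Subgroup G), x⁻¹ * w * x ∈ K := by
  obtain ⟨Q⟩ : Nonempty (Sylow p ↥K) := inferInstance
  have hQG : IsPGroup p ((Q : Subgroup ↥K).map K.subtype) := Q.2.map K.subtype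
  obtain ⟨P', hP'⟩ := hQG.exists_le_sylow
  have hKne : Nat.card ↥K ≠ 0 := Nat.card_pos.ne'
  have hIne : K.index ≠ 0 := fun h => hK (h ▸ dvd_zero p)
  have hfact : (Nat.card G).factorization p = (Nat.card ↥K).factorization p := by
    rw [← K.card_mul_index, Nat.factorization_mul hKne hIne]
    simp [Nat.factorization_eq_zero_of_not_dvd hK]
  have hcard : Nat.card ↥((Q : Subgroup ↥K).map K.subtype) = Nat.card ↥(P' : Subgroup G) := by
    rw [Nat.card_congr
        ((Subgroup.equivMapOfInjective _ K.subtype K.subtype_injective).symm.toEquiv),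
      Q.card_eq_multiplicity, P'.card_eq_multiplicity, hfact]
  have hEq : (Q : Subgroup ↥K).map K.subtype = ↑P' :=
    Subgroup.eq_of_le_of_card_ge hP' hcard.ge
  have hP'K : (P' : Subgroup G) ≤ K := by
    rw [← hEq]; exact Subgroup.map_subtype_le _
  obtain ⟨x, hx⟩ := MulAction.exists_smul_eq G P' P
  refine ⟨x, fun w hw => ?_⟩
  have hsub : (P : Subgroup G) = MulAut.conj x • (P' : Subgroup G) := by
    rw [← hx]; rfl
  rw [hsub] at hw
  rw [Subgroup.mem_pointwise_smul_iff_inv_smul_mem] at hw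
  apply hP'K
  simpa [MulAut.smul_def, MulAut.conj_inv_apply] using hw

theorem exists_rep [Fintype G] {p : ℕ} [Fact p.Prime] (P : Sylow p G) {g : G}
    (hg : ¬ p ∣ (Subgroup.centralizer {g}).index) :
    ∃ h : G, IsConj g h ∧ (P : Subgroup G) ≤ Subgroup.centralizer {h} := by
  obtain ⟨x, hx⟩ := sylow_le_conj_centralizer P (Subgroup.centralizer {g}) hg
  refine ⟨x * g * x⁻¹, isConj_iff.mpr ⟨x, rfl⟩, ?_⟩
  intro w hw
  have key := Subgroup.mem_centralizer_iff.mp (hx w hw) g rfl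
  rw [Subgroup.mem_centralizer_iff]
  intro h' hh'
  rw [Set.mem_singleton_iff] at hh'
  rw [hh']
  have h2 := congrArg (fun t => x * t * x⁻¹) key
  simp only [mul_assoc, inv_mul_cancel_left, mul_inv_cancel_left, inv_mul_cancel,
    mul_inv_cancel, mul_one] at h2 ⊢
  exact h2

theorem coprime_index_of_sylow_le [Fintype G] {p : ℕ} [Fact p.Prime] (P : Sylow p G)
    {K : Subgroup G} (h : ↑P ≤ K) : p.Coprime K.index := by
  rw [Nat.Prime.coprime_iff_not_dvd Fact.out]
  intro hd
  exact P.not_dvd_index (dvd_trans hd (Subgroup.index_dvd_of_le h))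

theorem normalizer_subgroupOf_of_le {P K : Subgroup G} (h : P ≤ K) :
    Subgroup.normalizer ((P.subgroupOf K : Subgroup K) : Set K) = (Subgroup.normalizer (P : Set G)).subgroupOf K := by
  ext y
  simp only [Subgroup.mem_subgroupOf, Subgroup.mem_normalizer_iff]
  constructor
  · intro hy w
    constructor
    · intro hw
      have h1 := (hy ⟨w, h hw⟩).mp (by simpa [Subgroup.mem_subgroupOf] using hw)
      simpa [Subgroup.mem_subgroupOf] using h1
    · intro hw
      have hwK : w ∈ K := by
        have h1 : ((y : G) * w * (y : G)⁻¹ : G) ∈ K := h hw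
        have h2 := K.mul_mem (K.mul_mem (K.inv_mem y.2) h1) y.2
        simpa [mul_assoc] using h2
      have h1 := (hy ⟨w, hwK⟩).mpr (by simpa [Subgroup.mem_subgroupOf] using hw)
      simpa [Subgroup.mem_subgroupOf] using h1
  · intro hy z
    constructor
    · intro hz
      simpa [Subgroup.mem_subgroupOf] using (hy (z : G)).mp (by simpa using hz)
    · intro hz
      simpa [Subgroup.mem_subgroupOf] using (hy (z : G)).mpr (by simpa using hz)

theorem centralizer_map_subtype (Nn : Subgroup G) (n : ↥Nn) :
    (Subgroup.centralizer {n}).map Nn.subtype = Subgroup.centralizer {(n : G)} ⊓ Nn := by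
  ext x
  constructor
  · rintro ⟨m, hm, rfl⟩
    refine ⟨Subgroup.mem_centralizer_iff.mpr ?_, m.2⟩
    intro h' hh'
    rw [Set.mem_singleton_iff] at hh'
    rw [hh']
    exact congrArg Subtype.val (Subgroup.mem_centralizer_iff.mp hm n rfl)
  · rintro ⟨hc, hx⟩
    refine ⟨⟨x, hx⟩, Subgroup.mem_centralizer_iff.mpr ?_, rfl⟩
    intro h' hh'
    rw [Set.mem_singleton_iff] at hh'
    rw [hh']
    exact Subtype.ext (Subgroup.mem_centralizer_iff.mp hc (n : G) rfl)

theorem centralizer_conj_map (c g : G) :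
    (Subgroup.centralizer {g}).map ((MulAut.conj c : G ≃* G) : G →* G)
      = Subgroup.centralizer {c * g * c⁻¹} := by
  ext y
  constructor
  · rintro ⟨z, hz, rfl⟩
    rw [Subgroup.mem_centralizer_iff]
    intro h' hh'
    rw [Set.mem_singleton_iff] at hh'
    rw [hh']
    have key := Subgroup.mem_centralizer_iff.mp hz g rfl
    show c * g * c⁻¹ * (c * z * c⁻¹) = c * z * c⁻¹ * (c * g * c⁻¹)
    simp only [mul_assoc, inv_mul_cancel_left]
    rw [← mul_assoc g z, key, mul_assoc]
  · intro hy
    have key := Subgroup.mem_centralizer_iff.mp hy (c * g * c⁻¹) rfl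
    refine ⟨c⁻¹ * y * c, Subgroup.mem_centralizer_iff.mpr ?_, ?_⟩
    · intro h' hh'
      rw [Set.mem_singleton_iff] at hh'
      rw [hh']
      have h2 := congrArg (fun t => c⁻¹ * t * c) key
      simp only [mul_assoc, inv_mul_cancel_left, mul_inv_cancel_left, inv_inv] at h2 ⊢
      simpa using h2
    · show c * (c⁻¹ * y * c) * c⁻¹ = y
      group

theorem mu_centralizer_isConj {g h : G} (hc : IsConj g h) (p : ℕ) :
    mu p ↥(Subgroup.centralizer {g}) = mu p ↥(Subgroup.centralizer {h}) := by
  obtain ⟨c, hc⟩ := isConj_iff.mp hc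
  rw [← hc]
  exact mu_congr (((MulAut.conj c : G ≃* G).subgroupMap _).trans
    (MulEquiv.subgroupCongr (centralizer_conj_map c g))) p

end GroupHelpers

section NHelpers

variable {G : Type} [Group G] {p : ℕ} [Fact p.Prime]

theorem le_centralizer_subgroupOf (P : Sylow p G) (n : ↥(Subgroup.normalizer ((P : Subgroup G) : Set G))) :
    ((P : Subgroup G).subgroupOf (Subgroup.normalizer ((P : Subgroup G) : Set G)) ≤ Subgroup.centralizer {n})
      ↔ (P : Subgroup G) ≤ Subgroup.centralizer {(n : G)} := by
  constructor
  · intro h w hw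
    have hwN : w ∈ Subgroup.normalizer ((P : Subgroup G) : Set G) := Subgroup.le_normalizer hw
    have hq : (⟨w, hwN⟩ : ↥(Subgroup.normalizer ((P : Subgroup G) : Set G)))
        ∈ (P : Subgroup G).subgroupOf (Subgroup.normalizer ((P : Subgroup G) : Set G)) := by
      rw [Subgroup.mem_subgroupOf]; exact hw
    have h2 := Subgroup.mem_centralizer_iff.mp (h hq) n rfl
    rw [Subgroup.mem_centralizer_iff]
    intro h' hh'
    rw [Set.mem_singleton_iff] at hh'
    rw [hh']
    exact congrArg Subtype.val h2
  · intro h q hq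
    have hqP : (q : G) ∈ (P : Subgroup G) := Subgroup.mem_subgroupOf.mp hq
    rw [Subgroup.mem_centralizer_iff]
    intro h' hh'
    rw [Set.mem_singleton_iff] at hh'
    rw [hh']
    exact Subtype.ext (Subgroup.mem_centralizer_iff.mp (h hqP) (n : G) rfl)

theorem le_centralizer_of_coprime [Fintype G] (P : Sylow p G)
    (n : ↥(Subgroup.normalizer ((P : Subgroup G) : Set G)))
    (hn : ¬ p ∣ (Subgroup.centralizer {n} :
      Subgroup ↥(Subgroup.normalizer ((P : Subgroup G) : Set G))).index) :
    (P : Subgroup G) ≤ Subgroup.centralizer {(n : G)} := by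
  haveI : Fintype ↥(Subgroup.normalizer ((P : Subgroup G) : Set G)) := Fintype.ofFinite _
  obtain ⟨x, hx⟩ := sylow_le_conj_centralizer (P.subtype Subgroup.le_normalizer)
    (Subgroup.centralizer {n}) hn
  rw [← le_centralizer_subgroupOf P n]
  intro q hq
  have hq' : (q : G) ∈ (P : Subgroup G) := Subgroup.mem_subgroupOf.mp hq
  have hw : x * q * x⁻¹
      ∈ ((P.subtype Subgroup.le_normalizer : Sylow p _) : Subgroup _) := by
    rw [Sylow.coe_subtype, Subgroup.mem_subgroupOf]
    have h2 := (Subgroup.mem_normalizer_iff.mp x.2 (q : G)).mp hq'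
    simpa using h2
  have h3 := hx _ hw
  simpa [mul_assoc] using h3

theorem le_centralizer_of_isConj (P : Sylow p G)
    {n s : ↥(Subgroup.normalizer ((P : Subgroup G) : Set G))} (h : IsConj n s)
    (hn : (P : Subgroup G) ≤ Subgroup.centralizer {(n : G)}) :
    (P : Subgroup G) ≤ Subgroup.centralizer {(s : G)} := by
  obtain ⟨c, hc⟩ := isConj_iff.mp h
  intro w hw
  have hw' : (c : G)⁻¹ * w * (c : G) ∈ (P : Subgroup G) := by
    apply (Subgroup.mem_normalizer_iff.mp c.2 ((c : G)⁻¹ * w * (c : G))).mpr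
    have h2 : (c : G) * ((c : G)⁻¹ * w * (c : G)) * (c : G)⁻¹ = w := by group
    rw [h2]; exact hw
  have hcomm : Commute (n : G) ((c : G)⁻¹ * w * (c : G)) :=
    Subgroup.mem_centralizer_iff.mp (hn hw') (n : G) rfl
  have hconj := hcomm.conj (c : G)
  have h1 : (c : G) * (n : G) * (c : G)⁻¹ = (s : G) := by
    exact_mod_cast congrArg Subtype.val hc
  have h2 : (c : G) * ((c : G)⁻¹ * w * (c : G)) * (c : G)⁻¹ = w := by group
  rw [h1, h2] at hconj
  rw [Subgroup.mem_centralizer_iff]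
  intro h' hh'
  rw [Set.mem_singleton_iff] at hh'
  rw [hh']
  exact hconj

theorem isConj_coe {Nn : Subgroup G} {n m : ↥Nn} (h : IsConj n m) :
    IsConj (n : G) (m : G) := by
  obtain ⟨c, hc⟩ := isConj_iff.mp h
  exact isConj_iff.mpr ⟨c, by exact_mod_cast congrArg Subtype.val hc⟩

theorem isConj_of_isConj_coe [Fintype G] (P : Sylow p G)
    {n m : ↥(Subgroup.normalizer ((P : Subgroup G) : Set G))}
    (hn : (P : Subgroup G) ≤ Subgroup.centralizer {(n : G)})
    (hm : (P : Subgroup G) ≤ Subgroup.centralizer {(m : G)})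
    (h : IsConj (n : G) (m : G)) : IsConj n m := by
  obtain ⟨c, hc⟩ := isConj_iff.mp h
  have hx : (n : G) ∈ Subgroup.centralizer ((P : Subgroup G) : Set G) := by
    rw [Subgroup.mem_centralizer_iff]
    intro w hw
    exact (Subgroup.mem_centralizer_iff.mp (hn hw) (n : G) rfl).symm
  have hy : (c⁻¹)⁻¹ * (n : G) * c⁻¹ ∈ Subgroup.centralizer ((P : Subgroup G) : Set G) := by
    rw [inv_inv, hc, Subgroup.mem_centralizer_iff]
    intro w hw
    exact (Subgroup.mem_centralizer_iff.mp (hm hw) (m : G) rfl).symm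
  obtain ⟨nn, hnnN, heq⟩ :=
    Sylow.conj_eq_normalizer_conj_of_mem_centralizer P (n : G) c⁻¹ hx hy
  have h4 : nn⁻¹ * (n : G) * nn = (m : G) := by
    rw [← heq, inv_inv, hc]
  refine isConj_iff.mpr ⟨(⟨nn, hnnN⟩ : ↥(Subgroup.normalizer ((P : Subgroup G) : Set G)))⁻¹, ?_⟩
  apply Subtype.ext
  push_cast
  rw [inv_inv]
  exact h4

theorem mu_centralizer_eq {p : ℕ} [Fact p.Prime]
    (MC : ∀ (H : Type) [Group H] [Fintype H] (Q : Sylow p H),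
      mu p H = mu p (Subgroup.normalizer ((Q : Subgroup H) : Set H)))
    {G : Type} [Group G] [Fintype G] (P : Sylow p G)
    (n : ↥(Subgroup.normalizer ((P : Subgroup G) : Set G)))
    (hc : (P : Subgroup G) ≤ Subgroup.centralizer {(n : G)}) :
    mu p ↥(Subgroup.centralizer {(n : G)})
      = mu p ↥(Subgroup.centralizer {n} :
          Subgroup ↥(Subgroup.normalizer ((P : Subgroup G) : Set G))) := by
  haveI : Fintype ↥(Subgroup.centralizer {(n : G)}) := Fintype.ofFinite _
  rw [MC ↥(Subgroup.centralizer {(n : G)}) (P.subtype hc)]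
  have h2 : Subgroup.normalizer (((P : Subgroup G).subgroupOf (Subgroup.centralizer {(n : G)}) :
        Subgroup ↥(Subgroup.centralizer {(n : G)})) : Set ↥(Subgroup.centralizer {(n : G)}))
      = (Subgroup.normalizer ((P : Subgroup G) : Set G)).subgroupOf (Subgroup.centralizer {(n : G)}) :=
    normalizer_subgroupOf_of_le hc
  have hmaps : ((Subgroup.normalizer ((P : Subgroup G) : Set G)).subgroupOf
        (Subgroup.centralizer {(n : G)})).map (Subgroup.centralizer {(n : G)}).subtype
      = (Subgroup.centralizer {n}).map (Subgroup.normalizer ((P : Subgroup G) : Set G)).subtype := by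
    rw [Subgroup.subgroupOf_map_subtype, centralizer_map_subtype, inf_comm]
  exact mu_congr ((MulEquiv.subgroupCongr h2).trans
    ((Subgroup.equivMapOfInjective _ _ (Subgroup.subtype_injective _)).trans
      ((MulEquiv.subgroupCongr hmaps).trans
        (Subgroup.equivMapOfInjective _ _ (Subgroup.subtype_injective _)).symm))) p

end NHelpers


/-- Assuming the McKay Conjecture for `p`: if `R` is a set of representatives for the
conjugacy classes of `G` of cardinality coprime to `p`, and `S` a set of representatives
for the conjugacy classes of `N = N_G(P)` of cardinality coprime to `p`, then
`Σ_{g ∈ R} μ_p(C_G(g)) = Σ_{n ∈ S} μ_p(C_N(n))`. -/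
theorem sum_mu_centralizer_eq_of_mckay {p : ℕ} [Fact p.Prime]
    (MC : ∀ (H : Type) [Group H] [Fintype H] (Q : Sylow p H),
      mu p H = mu p (Subgroup.normalizer ((Q : Subgroup H) : Set H)))
    {G : Type} [Group G] [Fintype G] (P : Sylow p G)
    (R : Finset G)
    (hR1 : ∀ g ∈ R, p.Coprime (Nat.card {h : G | IsConj g h}))
    (hR2 : ∀ g ∈ R, ∀ g' ∈ R, IsConj g g' → g = g')
    (hR3 : ∀ g : G, p.Coprime (Nat.card {h : G | IsConj g h}) → ∃ g' ∈ R, IsConj g g')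
    (S : Finset (Subgroup.normalizer ((P : Subgroup G) : Set G)))
    (hS1 : ∀ n ∈ S, p.Coprime
      (Nat.card {m : (Subgroup.normalizer ((P : Subgroup G) : Set G) : Subgroup G) | IsConj n m}))
    (hS2 : ∀ n ∈ S, ∀ n' ∈ S, IsConj n n' → n = n')
    (hS3 : ∀ n : (Subgroup.normalizer ((P : Subgroup G) : Set G) : Subgroup G),
      p.Coprime (Nat.card {m : (Subgroup.normalizer ((P : Subgroup G) : Set G) : Subgroup G) | IsConj n m}) →
        ∃ n' ∈ S, IsConj n n') :
    ∑ g ∈ R, mu p (Subgroup.centralizer {g})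
      = ∑ n ∈ S, mu p (Subgroup.centralizer {n} :
          Subgroup (Subgroup.normalizer ((P : Subgroup G) : Set G))) := by
  classical
  have hPiff : ∀ g : G, p.Coprime (Nat.card {h : G | IsConj g h})
      ↔ ¬ p ∣ (Subgroup.centralizer {g}).index := fun g => by
    rw [card_isConj_eq_index, Nat.Prime.coprime_iff_not_dvd Fact.out]
  have hNiff : ∀ n : ↥(Subgroup.normalizer ((P : Subgroup G) : Set G)),
      p.Coprime (Nat.card {m : (Subgroup.normalizer ((P : Subgroup G) : Set G) : Subgroup G) | IsConj n m})
      ↔ ¬ p ∣ (Subgroup.centralizer {n} :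
          Subgroup ↥(Subgroup.normalizer ((P : Subgroup G) : Set G))).index := fun n => by
    rw [card_isConj_eq_index, Nat.Prime.coprime_iff_not_dvd Fact.out]
  -- the transfer map
  have main : ∀ g ∈ R, ∃ s, s ∈ S ∧ IsConj g (s : G) ∧
      (P : Subgroup G) ≤ Subgroup.centralizer {(s : G)} := by
    intro g hg
    obtain ⟨h, hconj, hle⟩ := exists_rep P ((hPiff g).mp (hR1 g hg))
    have hhN : h ∈ Subgroup.normalizer ((P : Subgroup G) : Set G) := by
      rw [Subgroup.mem_normalizer_iff]
      intro w
      constructor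
      · intro hw
        have hcomm := Subgroup.mem_centralizer_iff.mp (hle hw) h rfl
        have h4 : h * w * h⁻¹ = w := by
          rw [hcomm, mul_assoc, mul_inv_cancel, mul_one]
        rw [h4]; exact hw
      · intro hw'
        have hcomm := Subgroup.mem_centralizer_iff.mp (hle hw') h rfl
        have h3 : h⁻¹ * (h * w * h⁻¹) * h = w := by group
        have h4 : h⁻¹ * (h * w * h⁻¹) * h = h * w * h⁻¹ := by
          rw [mul_assoc, ← hcomm, inv_mul_cancel_left]
        have h5 : w = h * w * h⁻¹ := h3.symm.trans h4
        rw [h5]; exact hw'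
    set n : ↥(Subgroup.normalizer ((P : Subgroup G) : Set G)) := ⟨h, hhN⟩ with hn_def
    have hlen : (P : Subgroup G) ≤ Subgroup.centralizer {(n : G)} := hle
    have hsub : ((P.subtype Subgroup.le_normalizer : Sylow p ↥(Subgroup.normalizer ((P : Subgroup G) : Set G))) :
        Subgroup ↥(Subgroup.normalizer ((P : Subgroup G) : Set G))) ≤ Subgroup.centralizer {n} := by
      rw [Sylow.coe_subtype]
      exact (le_centralizer_subgroupOf P n).mpr hlen
    have hcop := coprime_index_of_sylow_le (P.subtype Subgroup.le_normalizer) hsub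
    obtain ⟨s, hsS, hs⟩ := hS3 n (by
      rw [card_isConj_eq_index]
      exact hcop)
    refine ⟨s, hsS, ?_, le_centralizer_of_isConj P hs hlen⟩
    exact hconj.trans (isConj_coe hs)
  choose φ hφS hφconj hφle using main
  refine Finset.sum_bij φ hφS ?_ ?_ ?_
  · -- injectivity
    intro g₁ hg₁ g₂ hg₂ hEq
    apply hR2 g₁ hg₁ g₂ hg₂
    exact (hφconj g₁ hg₁).trans ((hEq ▸ (hφconj g₂ hg₂) : IsConj g₂ (φ g₁ hg₁ : G)).symm)
  · -- surjectivity
    intro b hbS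
    have hble : (P : Subgroup G) ≤ Subgroup.centralizer {(b : G)} :=
      le_centralizer_of_coprime P b ((hNiff b).mp (hS1 b hbS))
    have hbG : p.Coprime (Nat.card {h : G | IsConj (b : G) h}) := by
      rw [hPiff]
      intro hd
      exact (Nat.Prime.coprime_iff_not_dvd Fact.out).mp
        (coprime_index_of_sylow_le P hble) hd
    obtain ⟨g, hgR, hgconj⟩ := hR3 (b : G) hbG
    refine ⟨g, hgR, ?_⟩
    have h1 : IsConj ((φ g hgR : ↥(Subgroup.normalizer ((P : Subgroup G) : Set G))) : G) (b : G) :=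
      (hφconj g hgR).symm.trans hgconj.symm
    exact hS2 _ (hφS g hgR) b hbS
      (isConj_of_isConj_coe P (hφle g hgR) hble h1)
  · -- values
    intro g hg
    calc mu p ↥(Subgroup.centralizer {g})
        = mu p ↥(Subgroup.centralizer {((φ g hg : ↥(Subgroup.normalizer ((P : Subgroup G) : Set G))) : G)}) :=
          mu_centralizer_isConj (hφconj g hg) p
      _ = mu p ↥(Subgroup.centralizer {φ g hg} :
            Subgroup ↥(Subgroup.normalizer ((P : Subgroup G) : Set G))) :=
          mu_centralizer_eq MC P (φ g hg) (hφle g hg)
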